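/- Fix α ≥ 3 and let n ≥ 4 with p = α·√(log n / n) ≤ 1. In the Erdős–Rényi random graph G_{n,p} with independent uniform [0,1] labels on edges, conditioned on a fixed vertex x and any other vertex z, the probability that there is no temporal path of length exactly two from x to z is at most n^{−α²/4}. Consequently, x is a temporal source with probability at least 1 − n^{−α²/4 + 1}. -/

import Mathlib

/-- Temporal reachability: `TReachFrom G lab t u v` means there is a temporal
(non-decreasing-label) walk from `u` to `v` in `G` whose first edge has label `≥ t`. -/
inductive TReachFrom {V : Type*} (G : SimpleGraph V) (lab : Sym2 V → ℝ) : ℝ → V → V → Prop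
  | refl (t : ℝ) (v : V) : TReachFrom G lab t v v
  | step {t : ℝ} {u v w : V} : G.Adj u v → t ≤ lab s(u, v) →
      TReachFrom G lab (lab s(u, v)) v w → TReachFrom G lab t u w

/-- `u` reaches `v` by a temporal path. -/
def TReach {V : Type*} (G : SimpleGraph V) (lab : Sym2 V → ℝ) (u v : V) : Prop :=
  ∃ t, TReachFrom G lab t u v

/-- `v` is a temporal source: it reaches every vertex by a temporal path. -/
def TSource {V : Type*} (G : SimpleGraph V) (lab : Sym2 V → ℝ) (v : V) : Prop :=
  ∀ u, TReach G lab v u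

/-- `v` is a temporal sink: every vertex reaches it by a temporal path. -/
def TSink {V : Type*} (G : SimpleGraph V) (lab : Sym2 V → ℝ) (v : V) : Prop :=
  ∀ u, TReach G lab u v
open MeasureTheory

/-- The random simple temporal graph model: each of the `C(n,2)` potential edges of the
complete graph on `Fin n` carries an independent uniform label in `[0,1]`; the graph
`F_{n,p}` is recovered by keeping the edges with label at most `p` (the paper's coupling
of `F_{n,p}` as the restriction of `F_{n,1}` to labels in `[0,p]`; temporal reachability
only depends on presence of edges and the relative order of their labels). -/
noncomputable def rstgMeasure (n : ℕ) : Measure (Sym2 (Fin n) → ℝ) :=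
  Measure.pi fun _ => volume.restrict (Set.Icc (0 : ℝ) 1)

/-- The graph of edges present by time `p`: those whose label is at most `p`. -/
def presentGraph {n : ℕ} (ω : Sym2 (Fin n) → ℝ) (p : ℝ) : SimpleGraph (Fin n) :=
  SimpleGraph.fromEdgeSet {e | ω e ≤ p}

open ProbabilityTheory

noncomputable def unif : Measure ℝ := volume.restrict (Set.Icc (0 : ℝ) 1)

instance : IsProbabilityMeasure unif := ⟨by simp [unif, Real.volume_Icc]⟩

section Aux

variable {ι : Type*} [Fintype ι] [DecidableEq ι]

lemma pi_iInter_eval (s : Finset ι) (B : ι → Set ℝ) :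
    Measure.pi (fun _ : ι => unif) (⋂ i ∈ s, (fun ω : ι → ℝ => ω i) ⁻¹' B i)
      = ∏ i ∈ s, unif (B i) := by
  classical
  have hset : (⋂ i ∈ s, (fun ω : ι → ℝ => ω i) ⁻¹' B i)
      = Set.univ.pi (fun i => if i ∈ s then B i else Set.univ) := by
    ext ω
    simp only [Set.mem_iInter, Set.mem_preimage, Set.mem_pi, Set.mem_univ, true_implies]
    constructor
    · intro h i
      by_cases hi : i ∈ s <;> simp [hi, h]
    · intro h i hi
      have := h i
      simpa [hi] using this
  rw [hset, Measure.pi_pi]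
  rw [← Finset.prod_subset (Finset.subset_univ s) (fun i _ hi => by simp [hi])]
  exact Finset.prod_congr rfl fun i hi => by simp [hi]

lemma pi_eval_apply (i : ι) (B : Set ℝ) :
    Measure.pi (fun _ : ι => unif) ((fun ω : ι → ℝ => ω i) ⁻¹' B) = unif B := by
  simpa using pi_iInter_eval ({i} : Finset ι) (fun _ => B)

lemma pi_eval_iIndep :
    iIndepFun
      (fun i (ω : ι → ℝ) => ω i) (Measure.pi (fun _ : ι => unif)) := by
  rw [iIndepFun_iff_measure_inter_preimage_eq_mul]
  intro S sets _
  rw [pi_iInter_eval]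
  exact Finset.prod_congr rfl fun i _ => (pi_eval_apply i (sets i)).symm

lemma pi_pair_apply {a b : ι} (hab : a ≠ b) (D : Set (ℝ × ℝ)) (hD : MeasurableSet D) :
    Measure.pi (fun _ : ι => unif) {ω : ι → ℝ | (ω a, ω b) ∈ D} = (unif.prod unif) D := by
  have hmap : (Measure.pi (fun _ : ι => unif)).map (fun ω : ι → ℝ => (ω a, ω b))
      = unif.prod unif := by
    have h := (pi_eval_iIndep (ι := ι)).indepFun hab
    rw [indepFun_iff_map_prod_eq_prod_map_map (measurable_pi_apply a).aemeasurable
      (measurable_pi_apply b).aemeasurable] at h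
    have ha : (Measure.pi (fun _ : ι => unif)).map (fun ω : ι → ℝ => ω a) = unif :=
      Measure.ext fun s hs => by
        rw [Measure.map_apply (measurable_pi_apply a) hs, pi_eval_apply]
    have hb : (Measure.pi (fun _ : ι => unif)).map (fun ω : ι → ℝ => ω b) = unif :=
      Measure.ext fun s hs => by
        rw [Measure.map_apply (measurable_pi_apply b) hs, pi_eval_apply]
    rw [h, ha, hb]
  have : {ω : ι → ℝ | (ω a, ω b) ∈ D} = (fun ω : ι → ℝ => (ω a, ω b)) ⁻¹' D := rfl
  rw [this, ← Measure.map_apply ((measurable_pi_apply a).prodMk (measurable_pi_apply b)) hD,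
    hmap]

variable {κ : Type*} [DecidableEq κ]

/-- Key independence computation: the probability that finitely many pairs of distinct
coordinates all land in `D` is the product. -/
lemma pi_pairs_prod (e₁ e₂ : κ → ι) (D : Set (ℝ × ℝ)) (hD : MeasurableSet D)
    (s : Finset κ)
    (h12 : ∀ y ∈ s, e₁ y ≠ e₂ y)
    (h11 : ∀ y ∈ s, ∀ y' ∈ s, y ≠ y' → e₁ y ≠ e₁ y')
    (h22 : ∀ y ∈ s, ∀ y' ∈ s, y ≠ y' → e₂ y ≠ e₂ y')
    (h12' : ∀ y ∈ s, ∀ y' ∈ s, y ≠ y' → e₁ y ≠ e₂ y') :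
    Measure.pi (fun _ : ι => unif) {ω : ι → ℝ | ∀ y ∈ s, (ω (e₁ y), ω (e₂ y)) ∈ D}
      = ((unif.prod unif) D) ^ s.card := by
  classical
  induction s using Finset.induction_on with
  | empty => simp
  | @insert y₀ t hy₀ ih =>
    have hy₀mem : y₀ ∈ insert y₀ t := Finset.mem_insert_self y₀ t
    have hsplit : {ω : ι → ℝ | ∀ y ∈ insert y₀ t, (ω (e₁ y), ω (e₂ y)) ∈ D}
        = {ω : ι → ℝ | (ω (e₁ y₀), ω (e₂ y₀)) ∈ D}
          ∩ {ω : ι → ℝ | ∀ y ∈ t, (ω (e₁ y), ω (e₂ y)) ∈ D} := by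
      ext ω; simp [Set.mem_setOf_eq, forall_and]
    set S : Finset ι := {e₁ y₀, e₂ y₀} with hS
    set T : Finset ι := Finset.univ \ S with hT
    have hmemT : ∀ y ∈ t, e₁ y ∈ T ∧ e₂ y ∈ T := by
      intro y hy
      have hyt : y ∈ insert y₀ t := Finset.mem_insert_of_mem hy
      have hne : y ≠ y₀ := fun h => hy₀ (h ▸ hy)
      constructor <;> rw [hT, Finset.mem_sdiff] <;>
        refine ⟨Finset.mem_univ _, ?_⟩ <;> rw [hS] <;>
        simp only [Finset.mem_insert, Finset.mem_singleton, not_or]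
      · exact ⟨h11 y hyt y₀ hy₀mem hne, h12' y hyt y₀ hy₀mem hne⟩
      · exact ⟨fun h => h12' y₀ hy₀mem y hyt hne.symm h.symm,
          h22 y hyt y₀ hy₀mem hne⟩
    have hST : Disjoint S T := Finset.disjoint_sdiff
    have hIndep := (pi_eval_iIndep (ι := ι)).indepFun_finset S T hST
      (fun i => measurable_pi_apply i)
    set fS : (ι → ℝ) → (S → ℝ) := fun ω (i : S) => ω i with hfS
    set fT : (ι → ℝ) → (T → ℝ) := fun ω (i : T) => ω i with hfT
    have hi₁ : e₁ y₀ ∈ S := by simp [hS]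
    have hi₂ : e₂ y₀ ∈ S := by simp [hS]
    set DS : Set (S → ℝ) := (fun h : S → ℝ => (h ⟨e₁ y₀, hi₁⟩, h ⟨e₂ y₀, hi₂⟩)) ⁻¹' D with hDS
    set ET : Set (T → ℝ) :=
      {h : T → ℝ | ∀ y ∈ t, ∀ (m1 : e₁ y ∈ T) (m2 : e₂ y ∈ T),
        (h ⟨e₁ y, m1⟩, h ⟨e₂ y, m2⟩) ∈ D} with hET
    have hDSm : MeasurableSet DS :=
      ((measurable_pi_apply _).prodMk (measurable_pi_apply _)) hD
    have hETm : MeasurableSet ET := by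
      rw [hET]
      have : {h : T → ℝ | ∀ y ∈ t, ∀ (m1 : e₁ y ∈ T) (m2 : e₂ y ∈ T),
          (h ⟨e₁ y, m1⟩, h ⟨e₂ y, m2⟩) ∈ D}
          = ⋂ y ∈ t, ⋂ (m1 : e₁ y ∈ T), ⋂ (m2 : e₂ y ∈ T),
            (fun h : T → ℝ => (h ⟨e₁ y, m1⟩, h ⟨e₂ y, m2⟩)) ⁻¹' D := by
        ext h; simp [Set.mem_iInter]
      rw [this]
      refine MeasurableSet.biInter t.countable_toSet fun y _ => ?_
      refine MeasurableSet.iInter fun m1 => MeasurableSet.iInter fun m2 => ?_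
      exact ((measurable_pi_apply _).prodMk (measurable_pi_apply _)) hD
    have hpreS : fS ⁻¹' DS = {ω : ι → ℝ | (ω (e₁ y₀), ω (e₂ y₀)) ∈ D} := rfl
    have hpreT : fT ⁻¹' ET = {ω : ι → ℝ | ∀ y ∈ t, (ω (e₁ y), ω (e₂ y)) ∈ D} := by
      ext ω
      simp only [Set.mem_preimage, hET, Set.mem_setOf_eq, hfT]
      constructor
      · intro h y hy
        exact h y hy (hmemT y hy).1 (hmemT y hy).2
      · intro h y hy _ _
        exact h y hy
    have hmul := hIndep.measure_inter_preimage_eq_mul DS ET hDSm hETm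
    rw [hpreS, hpreT] at hmul
    have hcard : (insert y₀ t).card = t.card + 1 := Finset.card_insert_of_notMem hy₀
    have hpair : Measure.pi (fun _ : ι => unif) {ω : ι → ℝ | (ω (e₁ y₀), ω (e₂ y₀)) ∈ D}
        = (unif.prod unif) D := pi_pair_apply (h12 y₀ hy₀mem) D hD
    have iht := ih (fun y hy => h12 y (Finset.mem_insert_of_mem hy))
      (fun y hy y' hy' => h11 y (Finset.mem_insert_of_mem hy) y' (Finset.mem_insert_of_mem hy'))
      (fun y hy y' hy' => h22 y (Finset.mem_insert_of_mem hy) y' (Finset.mem_insert_of_mem hy'))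
      (fun y hy y' hy' => h12' y (Finset.mem_insert_of_mem hy) y' (Finset.mem_insert_of_mem hy'))
    rw [hsplit, hmul, hpair, iht, hcard, pow_succ, mul_comm]

end Aux

lemma unif_Icc (a b : ℝ) (ha : 0 ≤ a) (hb : b ≤ 1) :
    unif (Set.Icc a b) = ENNReal.ofReal (b - a) := by
  rw [unif, Measure.restrict_apply measurableSet_Icc, Set.Icc_inter_Icc,
    Real.volume_Icc, max_eq_left ha, min_eq_left hb]

lemma triangle_measure (p : ℝ) (hp0 : 0 ≤ p) (hp1 : p ≤ 1) :
    (unif.prod unif) {q : ℝ × ℝ | q.1 ≤ q.2 ∧ q.2 ≤ p} = ENNReal.ofReal (p ^ 2 / 2) := by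
  have hC : MeasurableSet {q : ℝ × ℝ | q.1 ≤ q.2 ∧ q.2 ≤ p} :=
    (measurableSet_le measurable_fst measurable_snd).inter
      (measurableSet_le measurable_snd measurable_const)
  rw [Measure.prod_apply hC]
  have hslice : ∀ a : ℝ, Prod.mk a ⁻¹' {q : ℝ × ℝ | q.1 ≤ q.2 ∧ q.2 ≤ p} = Set.Icc a p := by
    intro a; ext b; simp [Set.mem_Icc, and_comm]
  simp_rw [hslice]
  have h1 : ∫⁻ a, unif (Set.Icc a p) ∂unif
      = ∫⁻ a in Set.Icc (0:ℝ) 1, ENNReal.ofReal (p - a) ∂volume := by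
    rw [unif]
    refine setLIntegral_congr_fun measurableSet_Icc ?_
    intro a ha
    exact unif_Icc a p ha.1 hp1
  rw [h1]
  have hsplit : Set.Icc (0:ℝ) 1 = Set.Icc 0 p ∪ Set.Ioc p 1 :=
    (Set.Icc_union_Ioc_eq_Icc hp0 hp1).symm
  rw [hsplit, lintegral_union measurableSet_Ioc
    (Set.disjoint_left.2 fun a h1 h2 => absurd h1.2 (not_le.2 h2.1))]
  have h2 : ∫⁻ a in Set.Ioc p 1, ENNReal.ofReal (p - a) ∂volume = 0 := by
    rw [setLIntegral_congr_fun measurableSet_Ioc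
      (by intro a ha; show ENNReal.ofReal (p - a) = _; rw [ENNReal.ofReal_eq_zero.2 (by linarith [ha.1])]),
      lintegral_zero]
  have h3 : ∫⁻ a in Set.Icc 0 p, ENNReal.ofReal (p - a) ∂volume
      = ENNReal.ofReal (p ^ 2 / 2) := by
    rw [← ofReal_integral_eq_lintegral_ofReal]
    · congr 1
      rw [integral_Icc_eq_integral_Ioc, ← intervalIntegral.integral_of_le hp0]
      rw [intervalIntegral.integral_sub intervalIntegrable_const
        intervalIntegral.intervalIntegrable_id,
        intervalIntegral.integral_const, integral_id]
      simp
      ring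
    · exact (continuous_const.sub continuous_id).integrableOn_Icc
    · filter_upwards [ae_restrict_mem measurableSet_Icc] with a ha
      simp only [Pi.zero_apply]
      linarith [ha.2]
  rw [h2, h3, add_zero]

lemma real_bound (n : ℕ) (hn : 4 ≤ n) (α p : ℝ) (hα : 3 ≤ α)
    (hp : p = α * Real.sqrt (Real.log n / n)) (hp1 : p ≤ 1) :
    (1 - p ^ 2 / 2) ^ (n - 2) ≤ (n : ℝ) ^ (-(α ^ 2) / 4) := by
  have hnpos : (0 : ℝ) < n := by positivity
  have hn1 : (1 : ℝ) ≤ n := by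
    have h : (1 : ℕ) ≤ n := by omega
    exact_mod_cast h
  have hlog : 0 ≤ Real.log n := Real.log_nonneg hn1
  have hp0 : 0 ≤ p := by
    rw [hp]; exact mul_nonneg (by linarith) (Real.sqrt_nonneg _)
  have hp2 : p ^ 2 = α ^ 2 * (Real.log n / n) := by
    rw [hp, mul_pow, Real.sq_sqrt (div_nonneg hlog hnpos.le)]
  have hps : p ^ 2 ≤ 1 := by
    calc p ^ 2 ≤ 1 ^ 2 := pow_le_pow_left₀ hp0 hp1 2
    _ = 1 := one_pow 2
  have h0 : 0 ≤ 1 - p ^ 2 / 2 := by linarith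
  have step1 : 1 - p ^ 2 / 2 ≤ Real.exp (-(p ^ 2 / 2)) := by
    have := Real.add_one_le_exp (-(p ^ 2 / 2)); linarith
  have hN : ((n - 2 : ℕ) : ℝ) = (n : ℝ) - 2 := by
    have : (2 : ℕ) ≤ n := by omega
    push_cast [Nat.cast_sub this]; ring
  calc (1 - p ^ 2 / 2) ^ (n - 2)
      ≤ Real.exp (-(p ^ 2 / 2)) ^ (n - 2) := pow_le_pow_left₀ h0 step1 _
    _ = Real.exp (((n - 2 : ℕ) : ℝ) * -(p ^ 2 / 2)) := by
        rw [← Real.exp_nat_mul]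
    _ ≤ Real.exp (Real.log n * (-(α ^ 2) / 4)) := by
        apply Real.exp_le_exp.2
        rw [hN, hp2]
        have hu : 0 ≤ Real.log n / n := div_nonneg hlog hnpos.le
        have hL : Real.log n = (Real.log n / n) * n := by field_simp
        set u := Real.log n / n with hudef
        have hα2 : (0 : ℝ) ≤ α ^ 2 := sq_nonneg α
        have hN4 : (4 : ℝ) ≤ n := by exact_mod_cast hn
        nlinarith [mul_nonneg (mul_nonneg hα2 hu) (sub_nonneg.2 hN4)]
    _ = (n : ℝ) ^ (-(α ^ 2) / 4) := (Real.rpow_def_of_pos hnpos _).symm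

lemma failBound (n : ℕ) (hn : 4 ≤ n) (α p : ℝ) (hα : 3 ≤ α)
    (hp : p = α * Real.sqrt (Real.log n / n)) (hp1 : p ≤ 1)
    (x z : Fin n) (hxz : x ≠ z) :
    rstgMeasure n {ω | ¬ ∃ y : Fin n, y ≠ x ∧ y ≠ z ∧
        ω s(x, y) ≤ ω s(y, z) ∧ ω s(y, z) ≤ p}
      ≤ ENNReal.ofReal ((n : ℝ) ^ (-(α ^ 2) / 4)) := by
  classical
  have hnpos : (0 : ℝ) < n := by positivity
  have hlog : 0 ≤ Real.log n := by
    refine Real.log_nonneg ?_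
    have h : (1 : ℕ) ≤ n := by omega
    exact_mod_cast h
  have hp0 : 0 ≤ p := by
    rw [hp]; exact mul_nonneg (by linarith) (Real.sqrt_nonneg _)
  have hps : p ^ 2 ≤ 1 := by
    calc p ^ 2 ≤ 1 ^ 2 := pow_le_pow_left₀ hp0 hp1 2
    _ = 1 := one_pow 2
  set C : Set (ℝ × ℝ) := {q : ℝ × ℝ | q.1 ≤ q.2 ∧ q.2 ≤ p} with hCdef
  have hC : MeasurableSet C :=
    (measurableSet_le measurable_fst measurable_snd).inter
      (measurableSet_le measurable_snd measurable_const)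
  set s : Finset (Fin n) := Finset.univ \ {x, z} with hsdef
  have hmem : ∀ y : Fin n, y ∈ s ↔ y ≠ x ∧ y ≠ z := by
    intro y; simp [hsdef, not_or]
  have hcard : s.card = n - 2 := by
    rw [hsdef, Finset.card_sdiff_of_subset (Finset.subset_univ _), Finset.card_univ, Fintype.card_fin,
      Finset.card_insert_of_notMem (by simp [hxz]), Finset.card_singleton]
  have hevent : {ω : Sym2 (Fin n) → ℝ | ¬ ∃ y : Fin n, y ≠ x ∧ y ≠ z ∧
        ω s(x, y) ≤ ω s(y, z) ∧ ω s(y, z) ≤ p}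
      = {ω : Sym2 (Fin n) → ℝ | ∀ y ∈ s, (ω s(x, y), ω s(y, z)) ∈ Cᶜ} := by
    ext ω
    simp only [Set.mem_setOf_eq, not_exists, Set.mem_compl_iff, hCdef]
    constructor
    · intro h y hy
      have := h y
      rw [hmem] at hy
      tauto
    · intro h y
      by_cases hy : y ≠ x ∧ y ≠ z
      · have := h y ((hmem y).2 hy)
        tauto
      · tauto
  have hne : ∀ y ∈ s, ∀ y' ∈ s, True := fun _ _ _ _ => trivial
  have key := pi_pairs_prod (fun y : Fin n => s(x, y)) (fun y : Fin n => s(y, z))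
    Cᶜ hC.compl s
    (by
      intro y hy
      rw [hmem] at hy
      intro h
      rcases Sym2.eq_iff.1 h with ⟨h1, h2⟩ | ⟨h1, h2⟩
      · exact hy.1 h1.symm
      · exact hxz h1)
    (by
      intro y hy y' hy' hne h
      rcases Sym2.eq_iff.1 h with ⟨h1, h2⟩ | ⟨h1, h2⟩
      · exact hne h2
      · rw [hmem] at hy'; exact hy'.1 h1.symm)
    (by
      intro y hy y' hy' hne h
      rcases Sym2.eq_iff.1 h with ⟨h1, h2⟩ | ⟨h1, h2⟩
      · exact hne h1
      · rw [hmem] at hy; exact hy.2 h1)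
    (by
      intro y hy y' hy' hne h
      rw [hmem] at hy hy'
      rcases Sym2.eq_iff.1 h with ⟨h1, h2⟩ | ⟨h1, h2⟩
      · exact hy'.1 h1.symm
      · exact hxz h1)
  have hq : (unif.prod unif) Cᶜ = ENNReal.ofReal (1 - p ^ 2 / 2) := by
    rw [measure_compl hC (measure_ne_top _ _), measure_univ, triangle_measure p hp0 hp1,
      ENNReal.ofReal_sub 1 (by positivity), ENNReal.ofReal_one]
  have hμ : rstgMeasure n = Measure.pi (fun _ : Sym2 (Fin n) => unif) := rfl
  rw [hevent, hμ, key, hq, hcard,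
    ← ENNReal.ofReal_pow (by linarith)]
  exact ENNReal.ofReal_le_ofReal (real_bound n hn α p hα hp hp1)

/-- Fix `α ≥ 3`, `n ≥ 4` and `p = α·√(log n / n) ≤ 1`. In the random
simple temporal graph `F_{n,p}`, for fixed distinct vertices `x, z`: the probability
that there is no temporal path of length exactly two from `x` to `z` is at most
`n^{-α²/4}`; consequently `x` is a temporal source with probability at least
`1 - n^{-α²/4 + 1}`. -/
theorem rstg_two_hop (n : ℕ) (hn : 4 ≤ n) (α p : ℝ) (hα : 3 ≤ α)
    (hp : p = α * Real.sqrt (Real.log n / n)) (hp1 : p ≤ 1)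
    (x z : Fin n) (hxz : x ≠ z) :
    rstgMeasure n {ω | ¬ ∃ y : Fin n, y ≠ x ∧ y ≠ z ∧
        ω s(x, y) ≤ ω s(y, z) ∧ ω s(y, z) ≤ p}
      ≤ ENNReal.ofReal ((n : ℝ) ^ (-(α ^ 2) / 4)) ∧
    ENNReal.ofReal (1 - (n : ℝ) ^ (-(α ^ 2) / 4 + 1)) ≤
      rstgMeasure n {ω | TSource (presentGraph ω p) ω x} := by
  classical
  have hnpos : (0 : ℝ) < n := by positivity
  refine ⟨failBound n hn α p hα hp hp1 x z hxz, ?_⟩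
  set μ := rstgMeasure n with hμdef
  have hμ : rstgMeasure n = Measure.pi (fun _ : Sym2 (Fin n) => unif) := rfl
  have hprob : IsProbabilityMeasure μ := by
    rw [hμdef, hμ]; infer_instance
  set Fail : Fin n → Set (Sym2 (Fin n) → ℝ) := fun z' =>
    {ω | ¬ ∃ y : Fin n, y ≠ x ∧ y ≠ z' ∧ ω s(x, y) ≤ ω s(y, z') ∧ ω s(y, z') ≤ p} with hFail
  have hincl : {ω : Sym2 (Fin n) → ℝ | TSource (presentGraph ω p) ω x}ᶜ ⊆
      ⋃ z' ∈ Finset.univ.erase x, Fail z' := by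
    intro ω hω
    simp only [Set.mem_compl_iff, Set.mem_setOf_eq, TSource, not_forall] at hω
    obtain ⟨u, hu⟩ := hω
    have hux : u ≠ x := by
      rintro rfl
      exact hu ⟨0, TReachFrom.refl 0 u⟩
    refine Set.mem_biUnion (Finset.mem_erase.2 ⟨hux, Finset.mem_univ u⟩) ?_
    rw [hFail]
    simp only [Set.mem_setOf_eq]
    rintro ⟨y, hy1, hy2, hle, hple⟩
    apply hu
    have adj1 : (presentGraph ω p).Adj x y :=
      (SimpleGraph.fromEdgeSet_adj _).2 ⟨le_trans hle hple, fun h => hy1 h.symm⟩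
    have adj2 : (presentGraph ω p).Adj y u :=
      (SimpleGraph.fromEdgeSet_adj _).2 ⟨hple, hy2⟩
    exact ⟨ω s(x, y), TReachFrom.step adj1 le_rfl
      (TReachFrom.step adj2 hle (TReachFrom.refl _ u))⟩
  have hsum : μ ({ω : Sym2 (Fin n) → ℝ | TSource (presentGraph ω p) ω x}ᶜ)
      ≤ ENNReal.ofReal ((n : ℝ) ^ (-(α ^ 2) / 4 + 1)) := by
    calc μ ({ω : Sym2 (Fin n) → ℝ | TSource (presentGraph ω p) ω x}ᶜ)
        ≤ μ (⋃ z' ∈ Finset.univ.erase x, Fail z') := measure_mono hincl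
      _ ≤ ∑ z' ∈ Finset.univ.erase x, μ (Fail z') := measure_biUnion_finset_le _ _
      _ ≤ ∑ z' ∈ Finset.univ.erase x, ENNReal.ofReal ((n : ℝ) ^ (-(α ^ 2) / 4)) := by
          refine Finset.sum_le_sum fun z' hz' => ?_
          have hz'x : x ≠ z' := fun h => (Finset.mem_erase.1 hz').1 h.symm
          exact failBound n hn α p hα hp hp1 x z' hz'x
      _ = ((n - 1 : ℕ) : ENNReal) * ENNReal.ofReal ((n : ℝ) ^ (-(α ^ 2) / 4)) := by
          rw [Finset.sum_const, Finset.card_erase_of_mem (Finset.mem_univ x),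
            Finset.card_univ, Fintype.card_fin, nsmul_eq_mul]
      _ ≤ ENNReal.ofReal ((n : ℝ) ^ (-(α ^ 2) / 4 + 1)) := by
          rw [← ENNReal.ofReal_natCast, ← ENNReal.ofReal_mul (by positivity)]
          refine ENNReal.ofReal_le_ofReal ?_
          have hcast : ((n - 1 : ℕ) : ℝ) ≤ (n : ℝ) := by
            have := Nat.sub_le n 1
            exact_mod_cast this
          calc ((n - 1 : ℕ) : ℝ) * (n : ℝ) ^ (-(α ^ 2) / 4)
              ≤ (n : ℝ) * (n : ℝ) ^ (-(α ^ 2) / 4) :=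
                mul_le_mul_of_nonneg_right hcast (Real.rpow_nonneg hnpos.le _)
            _ = (n : ℝ) ^ (-(α ^ 2) / 4 + 1) := by
                rw [Real.rpow_add hnpos, Real.rpow_one, mul_comm]
  have hge : (1 : ENNReal) ≤ μ {ω : Sym2 (Fin n) → ℝ | TSource (presentGraph ω p) ω x}
      + μ ({ω : Sym2 (Fin n) → ℝ | TSource (presentGraph ω p) ω x}ᶜ) := by
    have := measure_union_le (μ := μ)
      {ω : Sym2 (Fin n) → ℝ | TSource (presentGraph ω p) ω x}
      ({ω : Sym2 (Fin n) → ℝ | TSource (presentGraph ω p) ω x}ᶜ)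
    rwa [Set.union_compl_self, measure_univ] at this
  rw [ENNReal.ofReal_sub 1 (Real.rpow_nonneg hnpos.le _), ENNReal.ofReal_one]
  rw [tsub_le_iff_right]
  calc (1 : ENNReal) ≤ μ {ω : Sym2 (Fin n) → ℝ | TSource (presentGraph ω p) ω x}
      + μ ({ω : Sym2 (Fin n) → ℝ | TSource (presentGraph ω p) ω x}ᶜ) := hge
    _ ≤ μ {ω : Sym2 (Fin n) → ℝ | TSource (presentGraph ω p) ω x}
      + ENNReal.ofReal ((n : ℝ) ^ (-(α ^ 2) / 4 + 1)) := add_le_add le_rfl hsum
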